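/- Let B be a pairwise balanced design over a finite linearly ordered set A such that no block of B contains all of A. Then (|A| + |B|) / 2 ≤ α(Γ_{B,3}) ≤ |A| + |B|. -/

import Mathlib

open Finset

/-- `B` is a weakly `m`-wise balanced design over the finite set `A`:
every block is a nonempty subset of `A`, every point of `A` lies in at least
one block, and any `m` pairwise distinct points of `A` are contained together
in at most one block. -/
def IsWeaklyBalancedDesign {α : Type*} [DecidableEq α] (m : ℕ)
    (A : Finset α) (B : Finset (Finset α)) : Prop :=
  (∀ C ∈ B, C ⊆ A) ∧
  (∀ C ∈ B, C.Nonempty) ∧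
  (∀ x ∈ A, ∃ C ∈ B, x ∈ C) ∧
  (∀ S : Finset α, S ⊆ A → S.card = m → (B.filter fun C => S ⊆ C).card ≤ 1)

/-- The vertex set of `Γ_{B,m}`: all incidence pairs `(x, C)` with `x ∈ C ∈ B`. -/
def designVerts {α : Type*} [DecidableEq α] (B : Finset (Finset α)) :
    Finset (α × Finset α) :=
  B.biUnion fun C => C.image fun x => (x, C)

/-- The graph `Γ_{B,m}` on incidence pairs: `(x, C₁)` and `(y, C₂)` are adjacent
iff `x < y`, `C₁ ≠ C₂` and `x ∈ C₂`, or symmetrically `y < x`, `C₂ ≠ C₁` and `y ∈ C₁`. -/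
def designGraph {α : Type*} [inst : LinearOrder α] (B : Finset (Finset α)) :
    SimpleGraph (designVerts (α := α) B) where
  Adj u v :=
    (u.val.1 < v.val.1 ∧ u.val.2 ≠ v.val.2 ∧ u.val.1 ∈ v.val.2) ∨
    (v.val.1 < u.val.1 ∧ v.val.2 ≠ u.val.2 ∧ v.val.1 ∈ u.val.2)
  symm := ⟨fun u v h => by tauto⟩
  loopless := ⟨fun u h => by
    rcases h with ⟨h, _, _⟩ | ⟨h, _, _⟩ <;> exact lt_irrefl _ h⟩

/-- The independence number of a graph: the largest size of an independent set of vertices. -/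
noncomputable def indepNum {V : Type*} (G : SimpleGraph V) : ℕ :=
  sSup {n | ∃ s : Finset V, s.card = n ∧ ∀ x ∈ s, ∀ y ∈ s, ¬ G.Adj x y}

lemma mem_designVerts' {α : Type*} [LinearOrder α] {B : Finset (Finset α)}
    {u : α × Finset α} : u ∈ designVerts B ↔ u.2 ∈ B ∧ u.1 ∈ u.2 := by
  obtain ⟨x, C⟩ := u
  simp only [designVerts, mem_biUnion, mem_image, Prod.mk.injEq]
  constructor
  · rintro ⟨D, hD, y, hy, rfl, rfl⟩; exact ⟨hD, hy⟩
  · rintro ⟨h1, h2⟩; exact ⟨C, h1, x, h2, rfl, rfl⟩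

/-- Any independent set in the design graph has at most `|A| + |B|` elements. -/
lemma indep_card_le_aux {α : Type*} [LinearOrder α]
    {A : Finset α} {B : Finset (Finset α)}
    (hBA : ∀ C ∈ B, C ⊆ A)
    (s : Finset {u // u ∈ designVerts B})
    (hs : ∀ x ∈ s, ∀ y ∈ s, ¬ (designGraph B).Adj x y) :
    s.card ≤ A.card + B.card := by
  classical
  have key : ∀ v ∈ s, ∀ w ∈ s, v.val.1 < w.val.1 → v.val.1 ∈ w.val.2 →
      v.val.2 = w.val.2 := by
    intro v hv w hw hlt hmem
    by_contra hne
    exact hs v hv w hw (by simp only [designGraph]; exact Or.inl ⟨hlt, hne, hmem⟩)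
  set f : {u // u ∈ designVerts B} → α ⊕ Finset α := fun v =>
    if ∃ w ∈ s, w.val.1 = v.val.1 ∧ w.val.2 ≠ v.val.2 then Sum.inr v.val.2
    else Sum.inl v.val.1 with hf
  have hmaps : ∀ v ∈ s, f v ∈ A.disjSum B := by
    intro v hv
    have hv2 := mem_designVerts'.mp v.property
    by_cases h : ∃ w ∈ s, w.val.1 = v.val.1 ∧ w.val.2 ≠ v.val.2
    · simp only [hf, if_pos h]
      exact inr_mem_disjSum.mpr hv2.1
    · simp only [hf, if_neg h]
      exact inl_mem_disjSum.mpr (hBA _ hv2.1 hv2.2)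
  have hinj : Set.InjOn f s := by
    intro u hu v hv hfe
    by_cases hHu : ∃ w ∈ s, w.val.1 = u.val.1 ∧ w.val.2 ≠ u.val.2 <;>
      by_cases hHv : ∃ w ∈ s, w.val.1 = v.val.1 ∧ w.val.2 ≠ v.val.2
    · -- both heavy
      simp only [hf, if_pos hHu, if_pos hHv, Sum.inr.injEq] at hfe
      have h1 : u.val.1 = v.val.1 := by
        rcases lt_trichotomy u.val.1 v.val.1 with hlt | heq | hgt
        · obtain ⟨w, hw, hw1, hw2⟩ := hHu
          have hwlt : w.val.1 < v.val.1 := hw1 ▸ hlt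
          have hwm : w.val.1 ∈ v.val.2 := by
            rw [hw1, ← hfe]
            exact (mem_designVerts'.mp u.property).2
          exact absurd ((key w hw v hv hwlt hwm).trans hfe.symm) hw2
        · exact heq
        · obtain ⟨w, hw, hw1, hw2⟩ := hHv
          have hwlt : w.val.1 < u.val.1 := hw1 ▸ hgt
          have hwm : w.val.1 ∈ u.val.2 := by
            rw [hw1, hfe]
            exact (mem_designVerts'.mp v.property).2
          exact absurd ((key w hw u hu hwlt hwm).trans hfe) hw2
      exact Subtype.ext (Prod.ext h1 hfe)
    · simp only [hf, if_pos hHu, if_neg hHv] at hfe; exact absurd hfe (by simp)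
    · simp only [hf, if_neg hHu, if_pos hHv] at hfe; exact absurd hfe (by simp)
    · -- both light
      simp only [hf, if_neg hHu, if_neg hHv, Sum.inl.injEq] at hfe
      have h2 : u.val.2 = v.val.2 := by
        by_contra hne
        exact hHu ⟨v, hv, hfe.symm, fun h => hne h.symm⟩
      exact Subtype.ext (Prod.ext hfe h2)
  calc s.card ≤ (A.disjSum B).card := card_le_card_of_injOn f hmaps hinj
    _ = A.card + B.card := card_disjSum _ _

theorem pbd_designGraph_indepNum {α : Type*} [LinearOrder α]
    (A : Finset α) (B : Finset (Finset α))
    (hB : IsWeaklyBalancedDesign 2 A B)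
    (htwo : ∀ C ∈ B, 2 ≤ C.card)
    (hpair : ∀ x ∈ A, ∀ y ∈ A, x ≠ y → (B.filter fun C => x ∈ C ∧ y ∈ C).card = 1)
    (hnotall : ∀ C ∈ B, ¬ A ⊆ C) :
    ((A.card : ℝ) + (B.card : ℝ)) / 2 ≤ (indepNum (designGraph B) : ℝ) ∧
      indepNum (designGraph B) ≤ A.card + B.card := by
  classical
  obtain ⟨hBA, hBne, hcov, _⟩ := hB
  set N : Set ℕ :=
    {n | ∃ s : Finset {u // u ∈ designVerts B}, s.card = n ∧
      ∀ x ∈ s, ∀ y ∈ s, ¬ (designGraph B).Adj x y} with hN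
  have hbdd : BddAbove N := by
    refine ⟨A.card + B.card, ?_⟩
    rintro n ⟨s, rfl, hs⟩
    exact indep_card_le_aux hBA s hs
  have hneN : N.Nonempty := ⟨0, ∅, card_empty, by simp⟩
  have hupper : indepNum (designGraph B) ≤ A.card + B.card := by
    apply csSup_le hneN
    rintro n ⟨s, rfl, hs⟩
    exact indep_card_le_aux hBA s hs
  refine ⟨?_, hupper⟩
  -- lower bound: an independent set of size |B|
  have hBmem : B.card ∈ N := by
    set s : Finset {u // u ∈ designVerts B} :=
      (designVerts B).attach.filter (fun v => v.val.2.min = (v.val.1 : WithTop α)) with hsdef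
    have hindep : ∀ x ∈ s, ∀ y ∈ s, ¬ (designGraph B).Adj x y := by
      intro u hu v hv hadj
      simp only [hsdef, mem_filter] at hu hv
      simp only [designGraph] at hadj
      rcases hadj with ⟨hlt, _, hmem⟩ | ⟨hlt, _, hmem⟩
      · have := Finset.min_le hmem
        rw [hv.2] at this
        exact absurd (WithTop.coe_le_coe.mp this) (not_le_of_gt hlt)
      · have := Finset.min_le hmem
        rw [hu.2] at this
        exact absurd (WithTop.coe_le_coe.mp this) (not_le_of_gt hlt)
    have hcard : B.card ≤ s.card := by
      have hsub : B ⊆ s.image (fun v => v.val.2) := by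
        intro C hC
        have hCne := hBne C hC
        have hmemV : (C.min' hCne, C) ∈ designVerts B :=
          mem_designVerts'.mpr ⟨hC, C.min'_mem hCne⟩
        have : (⟨(C.min' hCne, C), hmemV⟩ : {u // u ∈ designVerts B}) ∈ s := by
          simp only [hsdef, mem_filter]
          exact ⟨mem_attach _ _, (coe_min' hCne).symm⟩
        exact mem_image.mpr ⟨_, this, rfl⟩
      calc B.card ≤ (s.image (fun v => v.val.2)).card := card_le_card hsub
        _ ≤ s.card := card_image_le
    obtain ⟨t, hts, htc⟩ := Finset.exists_subset_card_eq hcard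
    exact ⟨t, htc, fun x hx y hy => hindep x (hts hx) y (hts hy)⟩
  have hlowB : (B.card : ℕ) ≤ indepNum (designGraph B) := le_csSup hbdd hBmem
  by_cases hA : A.Nonempty
  · -- an independent set of size |A|
    set a : α := A.max' hA with ha
    have hD : ∀ x : α, x ∈ A → ∃ C, C ∈ B ∧ x ∈ C ∧ a ∈ C := by
      intro x hx
      by_cases hxa : x = a
      · obtain ⟨C, hC, hxC⟩ := hcov x hx
        exact ⟨C, hC, hxC, hxa ▸ hxC⟩
      · have h1 := hpair x hx a (A.max'_mem hA) hxa
        have : (B.filter fun C => x ∈ C ∧ a ∈ C).Nonempty :=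
          card_pos.mp (h1 ▸ Nat.one_pos)
        obtain ⟨C, hC⟩ := this
        rw [mem_filter] at hC
        exact ⟨C, hC.1, hC.2⟩
    have hblock : ∀ x ∈ A, ∀ y ∈ A, ∀ C ∈ B, ∀ D ∈ B,
        x ≠ a → x ∈ C → a ∈ C → x ∈ D → a ∈ D → C = D := by
      intro x hx y hy C hC D hD hxa hxC haC hxD haD
      have h1 := hpair x hx a (A.max'_mem hA) hxa
      have h2 := card_le_one.mp h1.le
      exact h2 C (mem_filter.mpr ⟨hC, hxC, haC⟩) D (mem_filter.mpr ⟨hD, hxD, haD⟩)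
    set F : {x // x ∈ A} → {u // u ∈ designVerts B} := fun x =>
      ⟨(x.1, (hD x.1 x.2).choose),
        mem_designVerts'.mpr ⟨(hD x.1 x.2).choose_spec.1, (hD x.1 x.2).choose_spec.2.1⟩⟩
      with hF
    have hAmem : A.card ∈ N := by
      refine ⟨A.attach.image F, ?_, ?_⟩
      · rw [card_image_of_injective _ ?_, card_attach]
        intro x y hxy
        have : x.1 = y.1 := congrArg (fun v => v.val.1) hxy
        exact Subtype.ext this
      · intro u hu v hv hadj
        obtain ⟨x, -, rfl⟩ := mem_image.mp hu
        obtain ⟨y, -, rfl⟩ := mem_image.mp hv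
        have hxs := (hD x.1 x.2).choose_spec
        have hys := (hD y.1 y.2).choose_spec
        simp only [designGraph] at hadj
        rcases hadj with ⟨hlt, hne, hmem⟩ | ⟨hlt, hne, hmem⟩
        · simp only [hF] at hlt hne hmem
          have hxa : x.1 ≠ a := ne_of_lt (lt_of_lt_of_le hlt (A.le_max' _ y.2))
          exact hne (hblock x.1 x.2 y.1 y.2 _ hxs.1 _ hys.1 hxa hxs.2.1 hxs.2.2
            hmem hys.2.2)
        · simp only [hF] at hlt hne hmem
          have hya : y.1 ≠ a := ne_of_lt (lt_of_lt_of_le hlt (A.le_max' _ x.2))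
          exact hne (hblock y.1 y.2 x.1 x.2 _ hys.1 _ hxs.1 hya hys.2.1 hys.2.2
            hmem hxs.2.2)
    have hlowA : (A.card : ℕ) ≤ indepNum (designGraph B) := le_csSup hbdd hAmem
    have := indepNum (designGraph B)
    rw [div_le_iff₀ (by norm_num : (0:ℝ) < 2)]
    have h1 : (A.card : ℝ) ≤ indepNum (designGraph B) := Nat.cast_le.mpr hlowA
    have h2 : (B.card : ℝ) ≤ indepNum (designGraph B) := Nat.cast_le.mpr hlowB
    linarith
  · -- A empty, so B empty
    have hAe : A = ∅ := not_nonempty_iff_eq_empty.mp hA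
    have hBe : B = ∅ := by
      rw [eq_empty_iff_forall_notMem]
      intro C hC
      have := hBne C hC
      have hsub := hBA C hC
      rw [hAe, subset_empty] at hsub
      exact absurd (hsub ▸ this) (by simp)
    rw [hAe, hBe]
    simp
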